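/- Let A, B, C, D be skew-symmetric n×n complex matrices. Then the pencils (A,B) and (C,D) are strictly equivalent (there exist invertible complex n×n matrices P, Q with P·A·Q = C and P·B·Q = D) if and only if they are congruent (there exists an invertible complex n×n matrix T with Tᵀ·A·T = C and Tᵀ·B·T = D). -/

import Mathlib

open Polynomial Matrix
lemma local_sqrt (l : ℂ) (hl : l ≠ 0) (k : ℕ) :
    ∃ g : ℂ[X], (X - C l)^(k+1) ∣ g^2 - X := by
  induction k with
  | zero =>
    obtain ⟨s, hs⟩ := IsAlgClosed.exists_pow_nat_eq l (n := 2) (by norm_num)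
    exact ⟨C s, ⟨-1, by rw [← hs]; push_cast [map_pow]; ring⟩⟩
  | succ k ih =>
    obtain ⟨g, q, hq⟩ := ih
    have hgl : g.eval l ^ 2 = l := by
      have := congrArg (eval l) hq
      simp at this
      linear_combination this
    have hgl0 : g.eval l ≠ 0 := by
      intro h; apply hl; rw [← hgl, h]; ring
    set c : ℂ := -q.eval l / (2 * g.eval l) with hc
    have hroot : (X - C l) ∣ (q + 2 * C c * g) := by
      rw [dvd_iff_isRoot]
      simp [IsRoot, hc]
      field_simp
      ring
    obtain ⟨r, hr⟩ := hroot
    refine ⟨g + C c * (X - C l)^(k+1), r + (C c)^2 * (X - C l)^k, ?_⟩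
    linear_combination hq + (X - C l)^(k+1) * hr

lemma crt_pair {R : Type*} [CommRing R] {a b : R} (h : IsCoprime a b) (u v : R) :
    ∃ x, a ∣ x - u ∧ b ∣ x - v := by
  obtain ⟨c, d, h⟩ := h
  exact ⟨v*(c*a) + u*(d*b), ⟨(v-u)*c, by linear_combination u*h⟩,
    ⟨(u-v)*d, by linear_combination v*h⟩⟩

lemma sq_dvd_trick {d x g : ℂ[X]} (h1 : d ∣ x - g) (h2 : d ∣ g^2 - X) :
    d ∣ x^2 - X := by
  have e : x^2 - X = (x - g)*(x+g) + (g^2 - X) := by ring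
  rw [e]; exact dvd_add (h1.mul_right _) h2

lemma glue (k : ℂ → ℕ) (s : Finset ℂ) :
    ∃ f : ℂ[X], ∀ l ∈ s, l ≠ 0 → (X - C l)^(k l) ∣ f^2 - X := by
  classical
  induction s using Finset.induction_on with
  | empty => exact ⟨0, by simp⟩
  | @insert a s ha ih =>
    obtain ⟨f, hf⟩ := ih
    by_cases ha0 : a = 0
    · exact ⟨f, by
        intro l hl hl0
        rcases Finset.mem_insert.mp hl with rfl | hl
        · exact absurd ha0 hl0
        · exact hf l hl hl0⟩
    · -- get a local sqrt for a
      have hg : ∃ g : ℂ[X], (X - C a)^(k a) ∣ g^2 - X := by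
        cases hk : k a with
        | zero => exact ⟨0, by simp⟩
        | succ m => exact local_sqrt a ha0 m
      obtain ⟨g, hg⟩ := hg
      have hcop : IsCoprime ((X - C a)^(k a)) (∏ m ∈ s, (X - C m)^(k m)) := by
        refine IsCoprime.prod_right fun m hm => ?_
        exact (isCoprime_X_sub_C_of_isUnit_sub
          ((sub_ne_zero.mpr (by rintro rfl; exact ha hm)).isUnit)).pow
      obtain ⟨x, hx1, hx2⟩ := crt_pair hcop g f
      refine ⟨x, ?_⟩
      intro l hl hl0
      rcases Finset.mem_insert.mp hl with rfl | hl
      · exact sq_dvd_trick hx1 hg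
      · refine sq_dvd_trick (dvd_trans ?_ hx2) (hf l hl hl0)
        exact Finset.dvd_prod_of_mem _ hl

lemma exists_sqrt_poly (m : ℂ[X]) (hm : m ≠ 0) (h0 : m.coeff 0 ≠ 0) :
    ∃ f : ℂ[X], m ∣ f^2 - X := by
  classical
  have hsplit : Splits m := IsAlgClosed.splits m
  have heq := hsplit.eq_prod_roots
  obtain ⟨f, hf⟩ := glue (fun l => m.roots.count l) m.roots.toFinset
  refine ⟨f, ?_⟩
  have hlc : IsUnit (C m.leadingCoeff) := isUnit_C.mpr ((leadingCoeff_ne_zero.mpr hm).isUnit)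
  rw [heq, Finset.prod_multiset_map_count]
  refine (IsUnit.mul_left_dvd hlc).mpr ?_
  refine Finset.prod_dvd_of_coprime ?_ ?_
  · intro i hi j hj hij
    exact (isCoprime_X_sub_C_of_isUnit_sub ((sub_ne_zero.mpr hij).isUnit)).pow
  · intro l hl
    refine hf l hl ?_
    intro h
    subst h
    have : m.IsRoot 0 := isRoot_of_mem_roots (Multiset.mem_toFinset.mp hl)
    rw [IsRoot, ← coeff_zero_eq_eval_zero] at this
    exact h0 this

variable {n : ℕ}

lemma aeval_transpose (N : Matrix (Fin n) (Fin n) ℂ) (p : ℂ[X]) :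
    (aeval N p)ᵀ = aeval Nᵀ p := by
  induction p using Polynomial.induction_on' with
  | add p q hp hq => simp [map_add, transpose_add, hp, hq]
  | monomial k c =>
    simp [aeval_monomial, transpose_mul, transpose_pow,
      Matrix.algebraMap_eq_diagonal, Matrix.diagonal_transpose]
    rw [show diagonal ((algebraMap ℂ (Fin n → ℂ)) c) = algebraMap ℂ _ c from rfl,
      Algebra.commutes]

lemma pow_semiconj {N A : Matrix (Fin n) (Fin n) ℂ} (h : Nᵀ * A = A * N) (k : ℕ) :
    (Nᵀ)^k * A = A * N^k := by
  induction k with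
  | zero => simp
  | succ k ih =>
    rw [pow_succ, pow_succ, mul_assoc, h, ← mul_assoc, ih, mul_assoc]

lemma aeval_semiconj {N A : Matrix (Fin n) (Fin n) ℂ} (h : Nᵀ * A = A * N) (p : ℂ[X]) :
    (aeval Nᵀ p) * A = A * (aeval N p) := by
  induction p using Polynomial.induction_on' with
  | add p q hp hq => simp [map_add, add_mul, mul_add, hp, hq]
  | monomial k c =>
    rw [aeval_monomial, aeval_monomial, mul_assoc, pow_semiconj h, ← mul_assoc,
      Algebra.commutes, mul_assoc]

lemma matrix_sqrt {n : ℕ} (N : Matrix (Fin n) (Fin n) ℂ) (hN : IsUnit N.det)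
    (hsq : ∃ f : ℂ[X], N.charpoly ∣ f^2 - X) :
    ∃ S : Matrix (Fin n) (Fin n) ℂ, S * S = N ∧ IsUnit S.det ∧
      ∃ f : ℂ[X], S = aeval N f := by
  obtain ⟨f, q, hq⟩ := hsq
  have hSS : aeval N f * aeval N f = N := by
    have h0 : aeval N (f^2 - X) = 0 := by
      rw [hq, _root_.map_mul, Matrix.aeval_self_charpoly, zero_mul]
    have := sub_eq_zero.mp (by rwa [map_sub] at h0)
    rw [map_pow, pow_two] at this
    simpa using this
  refine ⟨aeval N f, hSS, ?_, f, rfl⟩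
  have : (aeval N f).det * (aeval N f).det = N.det := by
    rw [← det_mul, hSS]
  exact isUnit_of_mul_isUnit_left (this ▸ hN)

lemma trans_eq {n : ℕ} {P Q A C : Matrix (Fin n) (Fin n) ℂ}
    (hA : Aᵀ = -A) (hC : Cᵀ = -C) (h : P * A * Q = C) : Qᵀ * A * Pᵀ = C := by
  have h' := congrArg Matrix.transpose h
  rw [transpose_mul, transpose_mul, hA, hC] at h'
  -- h' : Qᵀ * (-A * Pᵀ) = -C
  have h'' : -(Qᵀ * (A * Pᵀ)) = -C := by rwa [neg_mul, mul_neg] at h'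
  rw [Matrix.mul_assoc]
  exact neg_inj.mp h''

lemma semiconj_of_two {n : ℕ} {P Q A C : Matrix (Fin n) (Fin n) ℂ}
    (hQQ : Q * Q⁻¹ = 1) (h1 : P * A * Q = C) (h1' : Qᵀ * A * Pᵀ = C) :
    (Pᵀ * Q⁻¹)ᵀ * A = A * (Pᵀ * Q⁻¹) := by
  have e : P * A * Q = Qᵀ * A * Pᵀ := h1.trans h1'.symm
  have hT : (Q⁻¹)ᵀ * Qᵀ = 1 := by rw [← transpose_mul, hQQ, transpose_one]
  rw [transpose_mul, transpose_transpose]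
  calc (Q⁻¹)ᵀ * P * A = (Q⁻¹)ᵀ * ((P * A * Q) * Q⁻¹) := by
        rw [Matrix.mul_assoc (P*A) Q Q⁻¹, hQQ, Matrix.mul_one]
        exact Matrix.mul_assoc _ _ _
    _ = (Q⁻¹)ᵀ * ((Qᵀ * A * Pᵀ) * Q⁻¹) := by rw [e]
    _ = ((Q⁻¹)ᵀ * Qᵀ) * (A * (Pᵀ * Q⁻¹)) := by simp only [Matrix.mul_assoc]
    _ = A * (Pᵀ * Q⁻¹) := by rw [hT, Matrix.one_mul]

lemma charpoly_coeff_ne_zero {n : ℕ} (N : Matrix (Fin n) (Fin n) ℂ) (hN : IsUnit N.det) :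
    N.charpoly.coeff 0 ≠ 0 := by
  intro h
  have := Matrix.det_eq_sign_charpoly_coeff N
  rw [h, mul_zero] at this
  exact (this ▸ hN).ne_zero rfl

/-- A classical result: two pencils of skew-symmetric matrices are strictly
equivalent if and only if they are congruent. -/
theorem skew_pencil_strictEquiv_iff_congruent (n : ℕ)
    (A B C D : Matrix (Fin n) (Fin n) ℂ)
    (hA : Aᵀ = -A) (hB : Bᵀ = -B) (hC : Cᵀ = -C) (hD : Dᵀ = -D) :
    (∃ P Q : Matrix (Fin n) (Fin n) ℂ,
        IsUnit P.det ∧ IsUnit Q.det ∧ P * A * Q = C ∧ P * B * Q = D) ↔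
    (∃ T : Matrix (Fin n) (Fin n) ℂ,
        IsUnit T.det ∧ Tᵀ * A * T = C ∧ Tᵀ * B * T = D) := by
  constructor
  · rintro ⟨P, Q, hP, hQ, h1, h2⟩
    have hQQ : Q * Q⁻¹ = 1 := mul_nonsing_inv Q hQ
    have hQQ' : Q⁻¹ * Q = 1 := nonsing_inv_mul Q hQ
    have h1' : Qᵀ * A * Pᵀ = C := trans_eq hA hC h1
    have h2' : Qᵀ * B * Pᵀ = D := trans_eq hB hD h2
    have hNA : (Pᵀ * Q⁻¹)ᵀ * A = A * (Pᵀ * Q⁻¹) := semiconj_of_two hQQ h1 h1'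
    have hNB : (Pᵀ * Q⁻¹)ᵀ * B = B * (Pᵀ * Q⁻¹) := semiconj_of_two hQQ h2 h2'
    have hNdet : IsUnit (Pᵀ * Q⁻¹).det := by
      rw [Matrix.det_mul, det_transpose]
      exact hP.mul (Q.isUnit_nonsing_inv_det hQ)
    obtain ⟨S, hSS, hSdet, f, hSf⟩ := matrix_sqrt (Pᵀ * Q⁻¹) hNdet
      (exists_sqrt_poly _ (Pᵀ * Q⁻¹).charpoly_monic.ne_zero
        (charpoly_coeff_ne_zero _ hNdet))
    have hSTA : Sᵀ * A = A * S := by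
      rw [hSf, aeval_transpose]; exact aeval_semiconj hNA f
    have hSTB : Sᵀ * B = B * S := by
      rw [hSf, aeval_transpose]; exact aeval_semiconj hNB f
    have keyA : Sᵀ * A * S = A * (Pᵀ * Q⁻¹) := by
      rw [hSTA, Matrix.mul_assoc, hSS]
    have keyB : Sᵀ * B * S = B * (Pᵀ * Q⁻¹) := by
      rw [hSTB, Matrix.mul_assoc, hSS]
    refine ⟨S * Q, ?_, ?_, ?_⟩
    · rw [Matrix.det_mul]; exact hSdet.mul hQ
    · calc (S*Q)ᵀ * A * (S*Q) = Qᵀ * ((Sᵀ * A * S) * Q) := by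
            rw [transpose_mul]; simp only [Matrix.mul_assoc]
        _ = Qᵀ * ((A * (Pᵀ * Q⁻¹)) * Q) := by rw [keyA]
        _ = Qᵀ * A * Pᵀ := by simp only [Matrix.mul_assoc, hQQ', Matrix.mul_one]
        _ = C := h1'
    · calc (S*Q)ᵀ * B * (S*Q) = Qᵀ * ((Sᵀ * B * S) * Q) := by
            rw [transpose_mul]; simp only [Matrix.mul_assoc]
        _ = Qᵀ * ((B * (Pᵀ * Q⁻¹)) * Q) := by rw [keyB]
        _ = Qᵀ * B * Pᵀ := by simp only [Matrix.mul_assoc, hQQ', Matrix.mul_one]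
        _ = D := h2'
  · rintro ⟨T, hT, h1, h2⟩
    exact ⟨Tᵀ, T, by rwa [det_transpose], hT, h1, h2⟩
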